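/- arXiv:1407.6144 — 6 statements merged into one kernel-verified Lean document; each statement's English description precedes it below -/
import Mathlib

section
/- Let P be a (±)ILP with k constraints and n ≥ 2 variables, and suppose two distinct variables x_j and x_{j'} have identical coefficient vectors, i.e., e_{i,j} = e_{i,j'} for all 1 ≤ i ≤ k. Let P' be the (±)ILP obtained from P by deleting the variable x_{j'} and replacing the range of x_j by the sumset R(x_j) + R(x_{j'}) = {L_j + L_{j'}, …, R_j + R_{j'}} (keeping all constants and all other coefficients and ranges). Then OPT(P) = OPT(P'). -/
/-- A `(±)ILP` with `k` constraints and variables indexed by `ι`: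
constants `d i`, coefficients `e i j ∈ {+1, -1}`, and variable ranges `{L j, …, R j}`. -/
structure PMILP (k : ℕ) (ι : Type) [Fintype ι] where
  d : Fin k → ℤ
  e : Fin k → ι → ℤ
  L : ι → ℤ
  R : ι → ℤ
  e_pm : ∀ i j, e i j = 1 ∨ e i j = -1
  le : ∀ j, L j ≤ R j

/-- A tuple is feasible if each variable lies in its range. -/
def PMILP.Feasible {k : ℕ} {ι : Type} [Fintype ι] (P : PMILP k ι) (x : ι → ℤ) : Prop :=
  ∀ j, P.L j ≤ x j ∧ x j ≤ P.R j

/-- The value of a tuple: the maximum over the constraints of `d i + ∑ j, e i j * x j`. -/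
def PMILP.val {k : ℕ} {ι : Type} [Fintype ι] (P : PMILP k ι) (hk : 0 < k) (x : ι → ℤ) : ℤ :=
  Finset.univ.sup' ⟨⟨0, hk⟩, Finset.mem_univ _⟩ fun i => P.d i + ∑ j, P.e i j * x j

/-- `OPT(P)`: the minimum value over feasible integer tuples. -/
noncomputable def PMILP.opt {k : ℕ} {ι : Type} [Fintype ι] (P : PMILP k ι) (hk : 0 < k) : ℤ :=
  sInf {v : ℤ | ∃ x : ι → ℤ, P.Feasible x ∧ P.val hk x = v}

/-- merging two variables with identical coefficient vectors
(deleting one of them and replacing the range of the other by the sumset of the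
two ranges) does not change the optimum of a `(±)ILP`. -/
theorem stmt2 {k n : ℕ} (hk : 0 < k) (hn : 2 ≤ n) (P : PMILP k (Fin n))
    (j j' : Fin n) (hjj : j ≠ j')
    (hcoef : ∀ i, P.e i j = P.e i j')
    (P' : PMILP k {m : Fin n // m ≠ j'})
    (hd : P'.d = P.d)
    (he : ∀ i (m : Fin n) (hm : m ≠ j'), P'.e i ⟨m, hm⟩ = P.e i m)
    (hLj : P'.L ⟨j, hjj⟩ = P.L j + P.L j')
    (hRj : P'.R ⟨j, hjj⟩ = P.R j + P.R j')
    (hother : ∀ (m : Fin n) (hm : m ≠ j'), m ≠ j →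
      P'.L ⟨m, hm⟩ = P.L m ∧ P'.R ⟨m, hm⟩ = P.R m) :
    P.opt hk = P'.opt hk := by
  classical
  -- Key: if `x'` is the "merged" version of `x`, they have the same value.
  have key : ∀ (x : Fin n → ℤ) (x' : {m : Fin n // m ≠ j'} → ℤ),
      (∀ m (hm : m ≠ j'), x' ⟨m, hm⟩ = x m + (if m = j then x j' else 0)) →
      P.val hk x = P'.val hk x' := by
    intro x x' h
    unfold PMILP.val
    refine Finset.sup'_congr _ rfl ?_
    intro i _
    rw [hd]
    congr 1
    set g : Fin n → ℤ := fun m => x m + (if m = j then x j' else 0) with hg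
    have h1 : ∀ m : {m : Fin n // m ≠ j'}, P'.e i m * x' m = P.e i m.1 * g m.1 := by
      rintro ⟨m, hm⟩
      rw [he i m hm, h m hm]
    rw [Fintype.sum_congr _ _ h1]
    have h2 : ∑ m ∈ Finset.univ \ {j'}, P.e i m * g m
        = ∑ m : {m : Fin n // m ≠ j'}, P.e i m.1 * g m.1 :=
      Finset.sum_subtype (Finset.univ \ {j'}) (fun m => by simp) (fun m => P.e i m * g m)
    rw [← h2, Finset.sum_sdiff_eq_sub (by simp), Finset.sum_singleton]
    have hgj' : g j' = x j' := by simp [hg, (Ne.symm hjj)]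
    have h3 : ∑ m, P.e i m * g m
        = (∑ m, P.e i m * x m) + ∑ m, (if m = j then P.e i m * x j' else 0) := by
      rw [← Finset.sum_add_distrib]
      refine Finset.sum_congr rfl ?_
      intro m _
      simp only [hg]
      by_cases hm : m = j <;> simp [hm, mul_add]
    rw [h3, hgj', Finset.sum_ite_eq' Finset.univ j (fun m => P.e i m * x j')]
    simp [hcoef i]
  -- The feasible-value sets coincide.
  have sets : {v : ℤ | ∃ x : Fin n → ℤ, P.Feasible x ∧ P.val hk x = v}
      = {v : ℤ | ∃ x' : {m : Fin n // m ≠ j'} → ℤ, P'.Feasible x' ∧ P'.val hk x' = v} := by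
    ext v
    constructor
    · rintro ⟨x, hf, rfl⟩
      refine ⟨fun m => x m.1 + (if m.1 = j then x j' else 0), ?_,
        (key x _ fun m hm => rfl).symm⟩
      rintro ⟨m, hm⟩
      by_cases hmj : m = j
      · have e1 : P'.L ⟨m, hm⟩ = P.L j + P.L j' := by
          rw [show (⟨m, hm⟩ : {m : Fin n // m ≠ j'}) = ⟨j, hjj⟩ from Subtype.ext hmj]
          exact hLj
        have e2 : P'.R ⟨m, hm⟩ = P.R j + P.R j' := by
          rw [show (⟨m, hm⟩ : {m : Fin n // m ≠ j'}) = ⟨j, hjj⟩ from Subtype.ext hmj]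
          exact hRj
        rw [e1, e2]
        simp only [hmj, eq_self_iff_true, if_true]
        have h1 := hf j
        have h2 := hf j'
        constructor <;> omega
      · have := (hother m hm hmj)
        simp only [if_neg hmj]
        rw [this.1, this.2]
        simpa using hf m
    · rintro ⟨x', hf', rfl⟩
      set s := x' ⟨j, hjj⟩ with hsdef
      set a := max (P.L j) (s - P.R j') with hadef
      have hs1 : P.L j + P.L j' ≤ s := by have := (hf' ⟨j, hjj⟩).1; rw [hLj] at this; exact this
      have hs2 : s ≤ P.R j + P.R j' := by have := (hf' ⟨j, hjj⟩).2; rw [hRj] at this; exact this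
      have hlj := P.le j
      have hlj' := P.le j'
      have ha1 : P.L j ≤ a := le_max_left _ _
      have ha2 : a ≤ P.R j := max_le hlj (by omega)
      have ha3 : a ≤ s - P.L j' := max_le (by omega) (by omega)
      have ha4 : s - P.R j' ≤ a := le_max_right _ _
      set x : Fin n → ℤ := fun m => if hm : m = j' then s - a else if m = j then a else x' ⟨m, hm⟩
        with hxdef
      have hxj : x j = a := by simp [hxdef, hjj]
      have hxj' : x j' = s - a := by simp [hxdef]
      have hxo : ∀ (m : Fin n) (hm : m ≠ j'), m ≠ j → x m = x' ⟨m, hm⟩ := by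
        intro m hm hmj; simp [hxdef, hm, hmj]
      refine ⟨x, ?_, (key x x' ?_)⟩
      · intro m
        by_cases h1 : m = j'
        · subst h1; rw [hxj']; omega
        · by_cases h2 : m = j
          · subst h2; rw [hxj]; exact ⟨ha1, ha2⟩
          · rw [hxo m h1 h2]
            have := hf' ⟨m, h1⟩
            rw [(hother m h1 h2).1, (hother m h1 h2).2] at this
            exact this
      · intro m hm
        by_cases h2 : m = j
        · have hx'm : x' ⟨m, hm⟩ = s := by
            rw [show (⟨m, hm⟩ : {m : Fin n // m ≠ j'}) = ⟨j, hjj⟩ from Subtype.ext h2]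
          rw [if_pos h2, hx'm, h2, hxj, hxj']
          ring
        · rw [if_neg h2, hxo m hm h2, add_zero]
  unfold PMILP.opt
  rw [sets]
end

section
/- Let A = (a_1, …, a_5) be 5 sequences in ℤ^ℓ and fix i ∈ {1, …, 5}. There exists an interval system B = (B_1, …, B_ℓ) such that every i-border sequence x ∈ ℤ^ℓ is consistent with B, and for every column j for which B_j is proper, G_j(B_j) = {i}. -/
/-- `a i` governs `x j` (w.r.t. the column medians `m`): `x j` is in the center,
or moving `x j` towards the center increases the distance to `a i`. -/
def Governs {ℓ : ℕ} (a : Fin 5 → Fin ℓ → ℤ) (m x : Fin ℓ → ℤ) (j : Fin ℓ) (i : Fin 5) : Prop :=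
  x j = m j ∨ (x j < m j ∧ a i j ≤ x j) ∨ (m j < x j ∧ x j ≤ a i j)

/-- `G_j(x)`: the set of indices `i` such that `a i` governs `x j`. -/
def GovSet {ℓ : ℕ} (a : Fin 5 → Fin ℓ → ℤ) (m x : Fin ℓ → ℤ) (j : Fin ℓ) : Set (Fin 5) :=
  {i | Governs a m x j i}

/-- A basic interval: `proper p` is the interval `[p+1, p+2]` (1-indexed) and
`degen p` is the degenerate interval `[p+1, p+1]` (1-indexed). -/
inductive BInt : Type
  | proper : Fin 4 → BInt
  | degen : Fin 5 → BInt

/-- Consistency of a value with a basic interval, w.r.t. the sorted column values `s`. -/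
def BInt.Consistent (s : Fin 5 → ℤ) : BInt → ℤ → Prop
  | .proper p, v => s p.castSucc ≤ v ∧ v ≤ s p.succ
  | .degen p, v => v = s p

/-- The set `G_j(I)` associated with a proper basic interval, w.r.t. the ordering
permutation `π` of the column: `G([1,2]) = {π 1}`, `G([2,3]) = {π 1, π 2}`,
`G([3,4]) = {π 4, π 5}`, `G([4,5]) = {π 5}` (1-indexed). -/
def GIset (π : Equiv.Perm (Fin 5)) (p : Fin 4) : Set (Fin 5) :=
  if p = 0 then {π 0}
  else if p = 1 then {π 0, π 1}
  else if p = 2 then {π 3, π 4}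
  else {π 4}

/-- `x` is an `i`-border sequence. -/
def IsBorderSeq {ℓ : ℕ} (a : Fin 5 → Fin ℓ → ℤ) (m : Fin ℓ → ℤ) (i : Fin 5)
    (x : Fin ℓ → ℤ) : Prop :=
  ∀ j, x j = a i j ∨ GovSet a m x j = {i}

/-- there is an interval system consistent with every `i`-border
sequence whose proper intervals `B j` all satisfy `G_j(B j) = {i}`. -/
theorem stmt13 {ℓ : ℕ} (a : Fin 5 → Fin ℓ → ℤ) (π : Fin ℓ → Equiv.Perm (Fin 5))
    (hπ : ∀ j, Monotone fun p => a (π j p) j) (i : Fin 5) :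
    ∃ B : Fin ℓ → BInt,
      (∀ x : Fin ℓ → ℤ, IsBorderSeq a (fun j => a (π j 2) j) i x →
        ∀ j, (B j).Consistent (fun p => a (π j p) j) (x j)) ∧
      (∀ j p, B j = BInt.proper p → GIset (π j) p = {i}) := by
  classical
  refine ⟨fun j => if π j 0 = i then .proper 0 else if π j 4 = i then .proper 3
      else .degen ((π j)⁻¹ i), ?_, ?_⟩
  · intro x hx j
    dsimp only
    have hs : ∀ p q : Fin 5, p ≤ q → a (π j p) j ≤ a (π j q) j := fun p q h => hπ j h
    have hne04 : π j 0 ≠ π j 4 := fun h => by simpa using (π j).injective h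
    rcases hx j with h | h
    · -- x j = a i j
      split_ifs with h0 h4
      · subst h0
        exact ⟨le_of_eq h.symm, h ▸ hs 0 1 (by decide)⟩
      · subst h4
        exact ⟨h ▸ hs 3 4 (by decide), le_of_eq h⟩
      · simp [BInt.Consistent, h]
    · -- GovSet = {i}
      have hmem : ∀ k : Fin 5, Governs a (fun j => a (π j 2) j) x j k → k = i := by
        intro k hk
        have : k ∈ GovSet a (fun j => a (π j 2) j) x j := hk
        rw [h] at this; exact this
      have hi : Governs a (fun j => a (π j 2) j) x j i := by
        have : i ∈ GovSet a (fun j => a (π j 2) j) x j := by rw [h]; rfl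
        exact this
      have hxm : x j ≠ a (π j 2) j := by
        intro hxe
        have h01 : (0 : Fin 5) = i := hmem 0 (Or.inl hxe)
        have h11 : (1 : Fin 5) = i := hmem 1 (Or.inl hxe)
        exact absurd (h01.trans h11.symm) (by decide)
      rcases hi with he | ⟨hlt, hle⟩ | ⟨hlt, hle⟩
      · exact absurd he hxm
      · -- x j < median, a i j ≤ x j
        have h0 : π j 0 = i :=
          hmem (π j 0) (Or.inr (Or.inl ⟨hlt, le_trans (by
            have := hs 0 ((π j)⁻¹ i) (Fin.zero_le _)
            simpa using this) hle⟩))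
        have h1ne : π j 1 ≠ i := fun h1 => by
          have := (π j).injective (h1.trans h0.symm); simp at this
        have hx1 : x j ≤ a (π j 1) j := by
          by_contra hc
          exact h1ne (hmem (π j 1) (Or.inr (Or.inl ⟨hlt, le_of_not_ge hc⟩)))
        rw [if_pos h0]
        refine ⟨?_, hx1⟩
        show a (π j 0) j ≤ x j
        rw [h0]; exact hle
      · -- median < x j ≤ a i j
        have h4 : π j 4 = i :=
          hmem (π j 4) (Or.inr (Or.inr ⟨hlt, le_trans hle (by
            have := hs ((π j)⁻¹ i) 4 (Fin.le_last _)
            simpa using this)⟩))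
        have h3ne : π j 3 ≠ i := fun h3 => by
          have := (π j).injective (h3.trans h4.symm); simp at this
        have hx3 : a (π j 3) j ≤ x j := by
          by_contra hc
          exact h3ne (hmem (π j 3) (Or.inr (Or.inr ⟨hlt, le_of_not_ge hc⟩)))
        have h0ne : π j 0 ≠ i := fun h0 => hne04 (h0.trans h4.symm)
        rw [if_neg h0ne, if_pos h4]
        refine ⟨hx3, ?_⟩
        show x j ≤ a (π j 4) j
        rw [h4]; exact hle
  · intro j p hB
    dsimp only at hB
    split_ifs at hB with h0 h4
    · cases hB; simp [GIset, h0]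
    · cases hB
      simp [GIset, h4]
end

section
/- Let A = (a_1, …, a_5) be 5 sequences in ℤ^ℓ and fix i ∈ {1, …, 5}. There exists an interval system M = (M_1, …, M_ℓ) such that every i-middle sequence x ∈ ℤ^ℓ is consistent with M, and for every column j for which M_j is proper, |G_j(M_j)| = 2 and i ∈ G_j(M_j). -/
/-- `x` is an `i`-middle sequence. -/
def IsMiddleSeq {ℓ : ℕ} (a : Fin 5 → Fin ℓ → ℤ) (m : Fin ℓ → ℤ) (i : Fin 5)
    (x : Fin ℓ → ℤ) : Prop :=
  ∀ j, i ∈ GovSet a m x j ∧ 2 ≤ (GovSet a m x j).ncard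

/-- there is an interval system consistent with every `i`-middle
sequence whose proper intervals `M j` all satisfy `|G_j(M j)| = 2` and `i ∈ G_j(M j)`. -/
theorem stmt14 {ℓ : ℕ} (a : Fin 5 → Fin ℓ → ℤ) (π : Fin ℓ → Equiv.Perm (Fin 5))
    (hπ : ∀ j, Monotone fun p => a (π j p) j) (i : Fin 5) :
    ∃ M : Fin ℓ → BInt,
      (∀ x : Fin ℓ → ℤ, IsMiddleSeq a (fun j => a (π j 2) j) i x →
        ∀ j, (M j).Consistent (fun p => a (π j p) j) (x j)) ∧
      (∀ j p, M j = BInt.proper p → (GIset (π j) p).ncard = 2 ∧ i ∈ GIset (π j) p) := by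
  classical
  refine ⟨fun j => if a i j < a (π j 2) j then .proper 1
      else if a (π j 2) j < a i j then .proper 2 else .degen 2, ?_, ?_⟩
  · intro x hx j
    obtain ⟨hig, hcard⟩ := hx j
    have hig' : Governs a (fun j => a (π j 2) j) x j i := hig
    simp only []
    rcases lt_trichotomy (a i j) (a (π j 2) j) with h1 | h1 | h1
    · rw [if_pos h1]
      have hxle : x j ≤ a (π j 2) j := by
        rcases hig' with h | ⟨h, _⟩ | ⟨h, h'⟩
        · exact le_of_eq h
        · exact le_of_lt h
        · exact absurd (h'.trans_lt h1) (not_lt.mpr h.le)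
      have hxge : a (π j 1) j ≤ x j := by
        rcases eq_or_lt_of_le hxle with heq | hlt
        · rw [heq]; exact hπ j (by decide : (1:Fin 5) ≤ 2)
        · by_contra hcon
          push_neg at hcon
          have hsub : GovSet a (fun j => a (π j 2) j) x j ⊆ {π j 0} := by
            intro i' hi'
            have hg : Governs a (fun j => a (π j 2) j) x j i' := hi'
            rcases hg with h | ⟨_, h⟩ | ⟨h, _⟩
            · exact absurd h hlt.ne
            · obtain ⟨q, hq⟩ : ∃ q, π j q = i' := ⟨(π j).symm i', (π j).apply_symm_apply i'⟩
              have hlt1 : a (π j q) j < a (π j 1) j := by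
                rw [hq]; exact lt_of_le_of_lt h hcon
              have hq0 : q = 0 := by
                by_contra hq0
                exact absurd (hπ j (show (1:Fin 5) ≤ q by omega)) (not_le.mpr hlt1)
              rw [← hq, hq0]; rfl
            · exact absurd h (not_lt.mpr hlt.le)
          have := (Set.ncard_le_ncard hsub (Set.finite_singleton _)).trans_eq
            (Set.ncard_singleton _)
          omega
      exact ⟨hxge, hxle⟩
    · rw [if_neg (not_lt.mpr h1.le), if_neg (not_lt.mpr h1.ge)]
      rcases hig' with h | ⟨h, h'⟩ | ⟨h, h'⟩
      · exact h
      · exact absurd (h'.trans_lt h) (not_lt.mpr h1.ge)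
      · exact absurd (h.trans_le h') (not_lt.mpr h1.le)
    · rw [if_neg (not_lt.mpr h1.le), if_pos h1]
      have hxge : a (π j 2) j ≤ x j := by
        rcases hig' with h | ⟨h, h'⟩ | ⟨h, _⟩
        · exact le_of_eq h.symm
        · exact absurd (h'.trans_lt h) (not_lt.mpr h1.le)
        · exact le_of_lt h
      have hxle : x j ≤ a (π j 3) j := by
        rcases eq_or_lt_of_le hxge with heq | hlt
        · rw [← heq]; exact hπ j (by decide : (2:Fin 5) ≤ 3)
        · by_contra hcon
          push_neg at hcon
          have hsub : GovSet a (fun j => a (π j 2) j) x j ⊆ {π j 4} := by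
            intro i' hi'
            have hg : Governs a (fun j => a (π j 2) j) x j i' := hi'
            rcases hg with h | ⟨h, _⟩ | ⟨_, h⟩
            · exact absurd h.symm hlt.ne
            · exact absurd h (not_lt.mpr hlt.le)
            · obtain ⟨q, hq⟩ : ∃ q, π j q = i' := ⟨(π j).symm i', (π j).apply_symm_apply i'⟩
              have hlt1 : a (π j 3) j < a (π j q) j := by
                rw [hq]; exact lt_of_lt_of_le hcon h
              have hq4 : q = 4 := by
                by_contra hq4
                exact absurd (hπ j (show q ≤ 3 by omega)) (not_le.mpr hlt1)
              rw [← hq, hq4]; rfl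
          have := (Set.ncard_le_ncard hsub (Set.finite_singleton _)).trans_eq
            (Set.ncard_singleton _)
          omega
      exact ⟨hxge, hxle⟩
  · intro j p hMj
    simp only [] at hMj
    split_ifs at hMj with h1 h2
    · cases hMj
      constructor
      · rw [show GIset (π j) 1 = {π j 0, π j 1} from rfl]
        exact Set.ncard_pair ((π j).injective.ne (by decide))
      · obtain ⟨q, hq⟩ : ∃ q, π j q = i := ⟨(π j).symm i, (π j).apply_symm_apply i⟩
        rw [show GIset (π j) 1 = {π j 0, π j 1} from rfl]
        have hq2 : q = 0 ∨ q = 1 := by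
          by_contra hcon
          push_neg at hcon
          have h2q : (2:Fin 5) ≤ q := by omega
          exact absurd (hq ▸ hπ j h2q) (not_le.mpr h1)
        rcases hq2 with rfl | rfl <;> [exact Or.inl hq.symm; exact Or.inr hq.symm]
    · cases hMj
      constructor
      · rw [show GIset (π j) 2 = {π j 3, π j 4} from rfl]
        exact Set.ncard_pair ((π j).injective.ne (by decide))
      · obtain ⟨q, hq⟩ : ∃ q, π j q = i := ⟨(π j).symm i, (π j).apply_symm_apply i⟩
        rw [show GIset (π j) 2 = {π j 3, π j 4} from rfl]
        have hq2 : q = 3 ∨ q = 4 := by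
          by_contra hcon
          push_neg at hcon
          have h2q : q ≤ (2:Fin 5) := by omega
          exact absurd (hq ▸ hπ j h2q) (not_le.mpr h2)
        rcases hq2 with rfl | rfl <;> [exact Or.inl hq.symm; exact Or.inr hq.symm]
end

section
/- Let A = (a_1, …, a_5) be 5 sequences in ℤ^ℓ and fix a 3-element set Δ ⊆ {1, …, 5}. There exists an interval system T = (T_1, …, T_ℓ) such that every Δ-triangle sequence x ∈ ℤ^ℓ is consistent with T, and for every column j for which T_j is proper, |G_j(T_j)| = 2 and G_j(T_j) ⊆ Δ. -/
/-- `x` is a `Δ`-triangle sequence. -/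
def IsTriangleSeq {ℓ : ℕ} (a : Fin 5 → Fin ℓ → ℤ) (m : Fin ℓ → ℤ) (Δ : Set (Fin 5))
    (x : Fin ℓ → ℤ) : Prop :=
  ∀ j, 2 ≤ (Δ ∩ GovSet a m x j).ncard

/-- for a 3-element set `Δ`, there is an interval system consistent with
every `Δ`-triangle sequence whose proper intervals `T j` all satisfy `|G_j(T j)| = 2`
and `G_j(T j) ⊆ Δ`. -/
theorem stmt15 {ℓ : ℕ} (a : Fin 5 → Fin ℓ → ℤ) (π : Fin ℓ → Equiv.Perm (Fin 5))
    (hπ : ∀ j, Monotone fun p => a (π j p) j) (Δ : Set (Fin 5)) (hΔ : Δ.ncard = 3) :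
    ∃ T : Fin ℓ → BInt,
      (∀ x : Fin ℓ → ℤ, IsTriangleSeq a (fun j => a (π j 2) j) Δ x →
        ∀ j, (T j).Consistent (fun p => a (π j p) j) (x j)) ∧
      (∀ j p, T j = BInt.proper p → (GIset (π j) p).ncard = 2 ∧ GIset (π j) p ⊆ Δ) := by
  classical
  refine ⟨fun j => if π j 0 ∈ Δ ∧ π j 1 ∈ Δ then .proper 1
    else if π j 3 ∈ Δ ∧ π j 4 ∈ Δ then .proper 2 else .degen 2, ?_, ?_⟩
  · intro x hx j
    have hm : ∀ p q : Fin 5, p ≤ q → a (π j p) j ≤ a (π j q) j := fun p q h => hπ j h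
    have hinj := (π j).injective
    obtain ⟨i1, i2, hi1, hi2, hne⟩ :
        ∃ i1 i2, i1 ∈ Δ ∩ GovSet a (fun j => a (π j 2) j) x j ∧
          i2 ∈ Δ ∩ GovSet a (fun j => a (π j 2) j) x j ∧ i1 ≠ i2 := by
      refine (Set.one_lt_ncard_iff (Set.toFinite _)).mp ?_
      have := hx j
      omega
    obtain ⟨hi1Δ, hg1⟩ := hi1
    obtain ⟨hi2Δ, hg2⟩ := hi2
    have hg1' : x j = a (π j 2) j ∨ (x j < a (π j 2) j ∧ a i1 j ≤ x j) ∨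
        (a (π j 2) j < x j ∧ x j ≤ a i1 j) := hg1
    have hg2' : x j = a (π j 2) j ∨ (x j < a (π j 2) j ∧ a i2 j ≤ x j) ∨
        (a (π j 2) j < x j ∧ x j ≤ a i2 j) := hg2
    show BInt.Consistent (fun p => a (π j p) j)
      (if π j 0 ∈ Δ ∧ π j 1 ∈ Δ then BInt.proper 1
        else if π j 3 ∈ Δ ∧ π j 4 ∈ Δ then BInt.proper 2 else BInt.degen 2) (x j)
    rcases lt_trichotomy (x j) (a (π j 2) j) with hlt | heq | hgt
    · -- x j < median
      have hle1 : a i1 j ≤ x j := by omega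
      have hle2 : a i2 j ≤ x j := by omega
      have hmem : ∀ i : Fin 5, a i j ≤ x j → i = π j 0 ∨ i = π j 1 := by
        intro i hle
        obtain ⟨q, rfl⟩ : ∃ q, π j q = i := ⟨(π j).symm i, (π j).apply_symm_apply i⟩
        fin_cases q
        · exact Or.inl rfl
        · exact Or.inr rfl
        · exact absurd (le_trans (hm 2 2 (by decide)) hle) (not_le.mpr hlt)
        · exact absurd (le_trans (hm 2 3 (by decide)) hle) (not_le.mpr hlt)
        · exact absurd (le_trans (hm 2 4 (by decide)) hle) (not_le.mpr hlt)
      have h01 : π j 0 ∈ Δ ∧ π j 1 ∈ Δ := by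
        rcases hmem i1 hle1 with h1 | h1 <;> rcases hmem i2 hle2 with h2 | h2
        · exact absurd (h1.trans h2.symm) hne
        · exact ⟨h1 ▸ hi1Δ, h2 ▸ hi2Δ⟩
        · exact ⟨h2 ▸ hi2Δ, h1 ▸ hi1Δ⟩
        · exact absurd (h1.trans h2.symm) hne
      rw [if_pos h01]
      refine ⟨show a (π j 1) j ≤ x j from ?_, le_of_lt hlt⟩
      rcases hmem i1 hle1 with h1 | h1 <;> rcases hmem i2 hle2 with h2 | h2
      · exact absurd (h1.trans h2.symm) hne
      · exact h2 ▸ hle2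
      · exact h1 ▸ hle1
      · exact absurd (h1.trans h2.symm) hne
    · -- x j = median
      split_ifs
      · exact ⟨show a (π j 1) j ≤ x j by have := hm 1 2 (by decide); omega, le_of_eq heq⟩
      · exact ⟨ge_of_eq heq, show x j ≤ a (π j 3) j by have := hm 2 3 (by decide); omega⟩
      · exact heq
    · -- x j > median
      have hle1 : x j ≤ a i1 j := by omega
      have hle2 : x j ≤ a i2 j := by omega
      have hmem : ∀ i : Fin 5, x j ≤ a i j → i = π j 3 ∨ i = π j 4 := by
        intro i hle
        obtain ⟨q, rfl⟩ : ∃ q, π j q = i := ⟨(π j).symm i, (π j).apply_symm_apply i⟩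
        fin_cases q
        · exact absurd (le_trans hle (hm 0 2 (by decide))) (not_le.mpr hgt)
        · exact absurd (le_trans hle (hm 1 2 (by decide))) (not_le.mpr hgt)
        · exact absurd (le_trans hle (hm 2 2 (by decide))) (not_le.mpr hgt)
        · exact Or.inl rfl
        · exact Or.inr rfl
      have h34 : π j 3 ∈ Δ ∧ π j 4 ∈ Δ := by
        rcases hmem i1 hle1 with h1 | h1 <;> rcases hmem i2 hle2 with h2 | h2
        · exact absurd (h1.trans h2.symm) hne
        · exact ⟨h1 ▸ hi1Δ, h2 ▸ hi2Δ⟩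
        · exact ⟨h2 ▸ hi2Δ, h1 ▸ hi1Δ⟩
        · exact absurd (h1.trans h2.symm) hne
      have hnot01 : ¬ (π j 0 ∈ Δ ∧ π j 1 ∈ Δ) := by
        rintro ⟨h0, h1⟩
        have hsub : ({π j 0, π j 1, π j 3, π j 4} : Set (Fin 5)) ⊆ Δ := by
          intro y hy
          rcases hy with rfl | rfl | rfl | hy
          · exact h0
          · exact h1
          · exact h34.1
          · exact (Set.mem_singleton_iff.mp hy) ▸ h34.2
        have hc4 : ({π j 0, π j 1, π j 3, π j 4} : Set (Fin 5)).ncard = 4 := by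
          rw [Set.ncard_insert_of_notMem (by simp [hinj.eq_iff]) (Set.toFinite _),
            Set.ncard_insert_of_notMem (by simp [hinj.eq_iff]) (Set.toFinite _),
            Set.ncard_pair (hinj.ne (by decide))]
        have := Set.ncard_le_ncard hsub Δ.toFinite
        omega
      rw [if_neg hnot01, if_pos h34]
      refine ⟨le_of_lt hgt, show x j ≤ a (π j 3) j from ?_⟩
      rcases hmem i1 hle1 with h1 | h1 <;> rcases hmem i2 hle2 with h2 | h2
      · exact absurd (h1.trans h2.symm) hne
      · exact h1 ▸ hle1
      · exact h2 ▸ hle2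
      · exact absurd (h1.trans h2.symm) hne
  · intro j p hT
    have hinj := (π j).injective
    have hT' : (if π j 0 ∈ Δ ∧ π j 1 ∈ Δ then BInt.proper 1
        else if π j 3 ∈ Δ ∧ π j 4 ∈ Δ then BInt.proper 2 else BInt.degen 2) =
        BInt.proper p := hT
    split_ifs at hT' with h1 h2
    · cases hT'
      constructor
      · simp only [GIset, if_neg (by decide : (1:Fin 4) ≠ 0), if_pos rfl]
        exact Set.ncard_pair (hinj.ne (by decide))
      · simp only [GIset, if_neg (by decide : (1:Fin 4) ≠ 0), if_pos rfl]
        rintro y (rfl | rfl)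
        · exact h1.1
        · exact h1.2
    · cases hT'
      constructor
      · simp only [GIset, if_neg (by decide : (2:Fin 4) ≠ 0),
          if_neg (by decide : (2:Fin 4) ≠ 1), if_pos rfl]
        exact Set.ncard_pair (hinj.ne (by decide))
      · simp only [GIset, if_neg (by decide : (2:Fin 4) ≠ 0),
          if_neg (by decide : (2:Fin 4) ≠ 1), if_pos rfl]
        rintro y (rfl | rfl)
        · exact h2.1
        · exact h2.2
end

section
/- Consider an easy (±)ILP in canonical form with n ≥ 2 variables, nonnegative integers D_1, …, D_n, and integers K', K_1, …, K_n all of the same parity with K_1 ≤ … ≤ K_n and K' < K_n. Let ℓ = max{i : K_i = K_1}, and assume D_i ≥ 1 for all 1 ≤ i ≤ ℓ. Then there exists an optimal feasible solution (y_1, …, y_n) with y_ℓ ≥ 1. -/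
/-- Feasibility for an easy `(±)ILP` in canonical form: `0 ≤ y i ≤ D i`. -/
def canonFeasible {ι : Type} [Fintype ι] (D : ι → ℕ) (y : ι → ℤ) : Prop :=
  ∀ i, 0 ≤ y i ∧ y i ≤ (D i : ℤ)

/-- The value of `y` for an easy `(±)ILP` in canonical form:
`max (∑ i, y i + K') (max_i (2 * y i - ∑ j, y j + K i))`. -/
def canonVal {ι : Type} [Fintype ι] (K' : ℤ) (K : ι → ℤ) (y : ι → ℤ) : ℤ :=
  Finset.univ.fold max (∑ i, y i + K') fun i => 2 * y i - ∑ j, y j + K i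

/-- The optimum of an easy `(±)ILP` in canonical form. -/
noncomputable def canonOpt {ι : Type} [Fintype ι] (D : ι → ℕ) (K' : ℤ) (K : ι → ℤ) : ℤ :=
  sInf {v : ℤ | ∃ y : ι → ℤ, canonFeasible D y ∧ canonVal K' K y = v}

lemma canonVal_le {ι : Type} [Fintype ι] {K' v : ℤ} {K y : ι → ℤ}
    (h1 : ∑ i, y i + K' ≤ v) (h2 : ∀ i, 2 * y i - ∑ j, y j + K i ≤ v) :
    canonVal K' K y ≤ v := by
  rw [canonVal, Finset.fold_max_le]
  exact ⟨h1, fun i _ => h2 i⟩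

lemma le_canonVal_base {ι : Type} [Fintype ι] {K' : ℤ} {K y : ι → ℤ} :
    ∑ i, y i + K' ≤ canonVal K' K y := by
  rw [canonVal, Finset.le_fold_max]
  exact Or.inl le_rfl

lemma le_canonVal_term {ι : Type} [Fintype ι] {K' : ℤ} {K y : ι → ℤ} (i : ι) :
    2 * y i - ∑ j, y j + K i ≤ canonVal K' K y := by
  rw [canonVal, Finset.le_fold_max]
  exact Or.inr ⟨i, Finset.mem_univ i, le_rfl⟩

/-- for a canonical easy `(±)ILP` with `n ≥ 2` variables, constant terms
of the same parity, `K₁ ≤ … ≤ Kₙ`, `K' < Kₙ`, `l = max {i : K i = K 1}` and `D i ≥ 1`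
for all `i ≤ l`, there is an optimal feasible solution `y` with `y l ≥ 1`. -/
theorem stmt18 {n : ℕ} (hn : 2 ≤ n) (D : Fin n → ℕ) (K' : ℤ) (K : Fin n → ℤ)
    (hpar : ∀ i, K i % 2 = K' % 2) (hmono : Monotone K)
    (hKn : K' < K ⟨n - 1, by omega⟩)
    (l : Fin n) (hl : K l = K ⟨0, by omega⟩) (hlmax : ∀ i, K i = K ⟨0, by omega⟩ → i ≤ l)
    (hD : ∀ i, i ≤ l → 1 ≤ D i) :
    ∃ y : Fin n → ℤ, canonFeasible D y ∧ canonVal K' K y = canonOpt D K' K ∧ 1 ≤ y l := by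
  set m : Fin n := ⟨n - 1, by omega⟩ with hm
  set S : Set ℤ := {v : ℤ | ∃ y : Fin n → ℤ, canonFeasible D y ∧ canonVal K' K y = v} with hS
  have hne : S.Nonempty := by
    refine ⟨canonVal K' K 0, 0, fun i => ⟨le_refl 0, by positivity⟩, rfl⟩
  have hbdd : BddBelow S := by
    refine ⟨K', fun v hv => ?_⟩
    obtain ⟨y, hyF, hyV⟩ := hv
    have hs : (0:ℤ) ≤ ∑ i, y i := Finset.sum_nonneg fun i _ => (hyF i).1
    have := le_canonVal_base (K := K) (K' := K') (y := y)
    omega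
  have hmem : canonOpt D K' K ∈ S := Int.csInf_mem hne hbdd
  obtain ⟨y, hyF, hyV⟩ := hmem
  by_cases hyl : 1 ≤ y l
  · exact ⟨y, hyF, hyV, hyl⟩
  have hyl0 : y l = 0 := le_antisymm (by omega) (hyF l).1
  have hDl : (1:ℤ) ≤ (D l : ℤ) := by exact_mod_cast hD l le_rfl
  have hopt_le : ∀ y' : Fin n → ℤ, canonFeasible D y' → canonOpt D K' K ≤ canonVal K' K y' :=
    fun y' h => csInf_le hbdd ⟨y', h, rfl⟩
  by_cases hex : ∃ j, j ≠ l ∧ 1 ≤ y j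
  · obtain ⟨j, hjl, hj1⟩ := hex
    obtain ⟨y', hy'⟩ : ∃ y' : Fin n → ℤ,
        y' = fun i => y i + (if i = l then 1 else 0) - (if i = j then 1 else 0) := ⟨_, rfl⟩
    have hsum : ∑ i, y' i = ∑ i, y i := by
      simp [hy', Finset.sum_add_distrib, Finset.sum_sub_distrib, Finset.sum_ite_eq']
    have feas : canonFeasible D y' := by
      intro i
      have h1 := hyF i
      by_cases hil : i = l
      · subst hil
        have : i ≠ j := fun h => hjl h.symm
        simp only [hy', if_pos rfl, if_neg this]
        omega
      · by_cases hij : i = j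
        · subst hij
          simp only [hy', if_neg hil, if_pos rfl]
          omega
        · simp only [hy', if_neg hil, if_neg hij]
          omega
    have hKlj : K l ≤ K j := by
      rw [hl]
      exact hmono (by simp [Fin.le_def])
    have hval : canonVal K' K y' ≤ canonVal K' K y := by
      apply canonVal_le
      · rw [hsum]; exact le_canonVal_base
      · intro i
        rw [hsum]
        have hterm := le_canonVal_term (K' := K') (K := K) (y := y) i
        by_cases hil : i = l
        · subst hil
          have hi : i ≠ j := fun h => hjl h.symm
          have htj := le_canonVal_term (K' := K') (K := K) (y := y) j
          simp only [hy', if_pos rfl, if_neg hi]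
          omega
        · by_cases hij : i = j
          · subst hij
            simp only [hy', if_neg hil, if_pos rfl]
            omega
          · simp only [hy', if_neg hil, if_neg hij]
            omega
    refine ⟨y', feas, le_antisymm (hval.trans hyV.le) (hopt_le y' feas), ?_⟩
    have : l ≠ j := fun h => hjl h.symm
    simp [hy', this, hyl0]
  · push_neg at hex
    have hy0 : ∀ i, y i = 0 := by
      intro i
      by_cases hil : i = l
      · rw [hil]; exact hyl0
      · have := hex i hil
        have := (hyF i).1
        omega
    have hsumy : ∑ i, y i = 0 := Finset.sum_eq_zero fun i _ => hy0 i
    have hvK : K m ≤ canonVal K' K y := by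
      have := le_canonVal_term (K' := K') (K := K) (y := y) m
      rw [hy0 m, hsumy] at this
      omega
    have hKim : ∀ i, K i ≤ K m := fun i => hmono (by simp [Fin.le_def, hm]; omega)
    have hparm : K m % 2 = K' % 2 := hpar m
    by_cases hc : K l = K m
    · -- all constants equal; l is the last index; use y' = e_l + e_0
      obtain ⟨j, hj⟩ : ∃ j : Fin n, j = ⟨0, by omega⟩ := ⟨_, rfl⟩
      have hjle : j ≤ l := by simp [hj, Fin.le_def]
      have hjne : j ≠ l := by
        intro h
        have : m ≤ l := hlmax m (by rw [← hc, hl])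
        have : (n:ℕ) - 1 ≤ l.val := this
        have : l.val = 0 := by rw [← h, hj]
        omega
      have hDj : (1:ℤ) ≤ (D j : ℤ) := by exact_mod_cast hD j hjle
      obtain ⟨y', hy'⟩ : ∃ y' : Fin n → ℤ,
          y' = fun i => (if i = l then 1 else 0) + (if i = j then 1 else 0) := ⟨_, rfl⟩
      have hsum : ∑ i, y' i = 2 := by
        simp [hy', Finset.sum_add_distrib, Finset.sum_ite_eq']
      have feas : canonFeasible D y' := by
        intro i
        by_cases hil : i = l
        · subst hil
          have : i ≠ j := fun h => hjne h.symm
          simp only [hy', if_pos rfl, if_neg this]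
          omega
        · by_cases hij : i = j
          · subst hij
            simp only [hy', if_neg hil, if_pos rfl]
            omega
          · simp only [hy', if_neg hil, if_neg hij]
            have := (D i).cast_nonneg (α := ℤ)
            omega
      have hval : canonVal K' K y' ≤ canonVal K' K y := by
        apply le_trans _ hvK
        apply canonVal_le
        · rw [hsum]; omega
        · intro i
          rw [hsum]
          have := hKim i
          by_cases hil : i = l
          · subst hil
            have : i ≠ j := fun h => hjne h.symm
            simp only [hy', if_pos rfl, if_neg this]
            omega
          · by_cases hij : i = j
            · subst hij
              simp only [hy', if_neg hil, if_pos rfl]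
              omega
            · simp only [hy', if_neg hil, if_neg hij]
              omega
      refine ⟨y', feas, le_antisymm (hval.trans hyV.le) (hopt_le y' feas), ?_⟩
      have : l ≠ j := fun h => hjne h.symm
      simp [hy', this]
    · -- K l < K m; use y' = e_l
      have hlm : K l < K m := lt_of_le_of_ne (hKim l) hc
      have hparl : K l % 2 = K' % 2 := hpar l
      obtain ⟨y', hy'⟩ : ∃ y' : Fin n → ℤ, y' = fun i => if i = l then 1 else 0 := ⟨_, rfl⟩
      have hsum : ∑ i, y' i = 1 := by
        simp [hy', Finset.sum_ite_eq']
      have feas : canonFeasible D y' := by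
        intro i
        by_cases hil : i = l
        · subst hil; simp only [hy', if_pos rfl]; omega
        · simp only [hy', if_neg hil]
          have := (D i).cast_nonneg (α := ℤ)
          omega
      have hval : canonVal K' K y' ≤ canonVal K' K y := by
        apply le_trans _ hvK
        apply canonVal_le
        · rw [hsum]; omega
        · intro i
          rw [hsum]
          have := hKim i
          by_cases hil : i = l
          · subst hil; simp only [hy', if_pos rfl]; omega
          · simp only [hy', if_neg hil]; omega
      refine ⟨y', feas, le_antisymm (hval.trans hyV.le) (hopt_le y' feas), by simp [hy']⟩
end

section
/- Consider an easy (±)ILP in canonical form with n ≥ 2 variables, nonnegative integers D_1, …, D_n and integers K', K_1, …, K_n with K_1 ≤ … ≤ K_n. Suppose for some index i, K_i = K_1 and D_i = 0. Then the optimum equals the optimum of the canonical program with n−1 variables obtained by deleting the variable y_i together with the constant K_i (keeping K' and all remaining D's and K's). -/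
lemma sum_restrict {n : ℕ} (i₀ : Fin n) (y : Fin n → ℤ) (hy0 : y i₀ = 0) :
    (∑ m : {m : Fin n // m ≠ i₀}, y m.1) = ∑ i, y i := by
  rw [← Finset.sum_subtype (Finset.univ.erase i₀) (by simp [Finset.mem_erase]) y]
  exact Finset.sum_erase _ hy0

lemma val_restrict {n : ℕ} (hn : 2 ≤ n) (K' : ℤ) (K : Fin n → ℤ) (i₀ : Fin n)
    (hKmin : ∀ j, K i₀ ≤ K j) (y : Fin n → ℤ) (hy0 : y i₀ = 0) (hynn : ∀ i, 0 ≤ y i) :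
    canonVal K' K y = canonVal K' (fun m : {m : Fin n // m ≠ i₀} => K m.1)
      (fun m => y m.1) := by
  have hsum := sum_restrict i₀ y hy0
  haveI : Nontrivial (Fin n) := Fin.nontrivial_iff_two_le.mpr hn
  obtain ⟨j, hj⟩ := exists_ne i₀
  unfold canonVal
  rw [hsum]
  apply le_antisymm
  · rw [Finset.fold_max_le]
    refine ⟨?_, fun x _ => ?_⟩
    · rw [Finset.le_fold_max]; left; exact le_rfl
    · rw [Finset.le_fold_max]
      by_cases hx : x = i₀
      · right
        refine ⟨⟨j, hj⟩, Finset.mem_univ _, ?_⟩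
        subst hx
        have := hKmin j
        have := hynn j
        simp only
        omega
      · right; exact ⟨⟨x, hx⟩, Finset.mem_univ _, le_rfl⟩
  · rw [Finset.fold_max_le]
    refine ⟨?_, fun x _ => ?_⟩
    · rw [Finset.le_fold_max]; left; exact le_rfl
    · rw [Finset.le_fold_max]; right; exact ⟨x.1, Finset.mem_univ _, le_rfl⟩

/-- for a canonical easy `(±)ILP` with `n ≥ 2` variables and
`K₁ ≤ … ≤ Kₙ`, if `K i₀ = K 1` and `D i₀ = 0` for some index `i₀`, then deleting the
variable `y i₀` together with the constant `K i₀` does not change the optimum. -/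
theorem stmt19 {n : ℕ} (hn : 2 ≤ n) (D : Fin n → ℕ) (K' : ℤ) (K : Fin n → ℤ)
    (hmono : Monotone K) (i₀ : Fin n)
    (hKi : K i₀ = K ⟨0, by omega⟩) (hDi : D i₀ = 0) :
    canonOpt D K' K =
      canonOpt (fun m : {m : Fin n // m ≠ i₀} => D m.1) K' (fun m => K m.1) := by
  have hKmin : ∀ j, K i₀ ≤ K j := by
    intro j
    rw [hKi]
    exact hmono (by simp [Fin.le_def])
  unfold canonOpt
  congr 1
  ext v
  constructor
  · rintro ⟨y, hfeas, rfl⟩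
    have hy0 : y i₀ = 0 := le_antisymm (by simpa [hDi] using (hfeas i₀).2) (hfeas i₀).1
    exact ⟨fun m => y m.1, fun m => hfeas m.1,
      (val_restrict hn K' K i₀ hKmin y hy0 (fun i => (hfeas i).1)).symm⟩
  · rintro ⟨z, hfeas, rfl⟩
    set y : Fin n → ℤ := fun i => if h : i = i₀ then 0 else z ⟨i, h⟩ with hy
    have hy0 : y i₀ = 0 := by simp [hy]
    have hfeas' : canonFeasible D y := by
      intro i
      by_cases h : i = i₀
      · subst h; simp [hy0]
      · simpa [hy, h] using hfeas ⟨i, h⟩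
    have hz : (fun m : {m : Fin n // m ≠ i₀} => y m.1) = z := by
      funext m; simp [hy, m.2]
    refine ⟨y, hfeas', ?_⟩
    rw [val_restrict hn K' K i₀ hKmin y hy0 (fun i => (hfeas' i).1), hz]
end
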